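/- Let f : [0,1] → ℝ be a continuous convex function, let S ⊂ ℝ≥0 be a finite nonempty set of non-negative numbers, and let f̂ = disc(f,S). Let β ∈ S, x* = ℓ(f|β), and x̂ = ℓ(f̂|β). Then x* ≤ x̂ and f(x*) ≤ f̂(x̂). -/

import Mathlib

noncomputable section

/-- The unit interval `[0,1] ⊆ ℝ`. -/
def unitI : Set ℝ := Set.Icc 0 1

/-- The left derivative of `f` at `x`, as an extended real:
`f'(x) = sup_{δ ∈ (0,x]} (f x - f (x - δ)) / δ`, with `f'(0) = ⊥ = -∞`. -/
def leftD (f : ℝ → ℝ) (x : ℝ) : EReal :=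
  ⨆ δ : {δ : ℝ // 0 < δ ∧ δ ≤ x}, (((f x - f (x - δ.1)) / δ.1 : ℝ) : EReal)

/-- `ℓ(f|β)`: the rightmost point of `[0,1]` at which the left derivative of `f`
is at most `β`. -/
def ell (f : ℝ → ℝ) (β : ℝ) : ℝ :=
  sSup {x ∈ unitI | leftD f x ≤ (β : EReal)}

/-- The `i`-th smallest element of a finite set `S ⊆ ℝ` (`0`-indexed; junk value `0`
when `i ≥ S.card`). So `sortedNth S (i-1)` is the paper's `α_i`. -/
def sortedNth (S : Finset ℝ) (i : ℕ) : ℝ := (S.sort (· ≤ ·)).getD i 0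

/-- The breakpoints `z_0 = 0, z_i = ℓ(f|α_i) (1 ≤ i ≤ k-1), z_k = 1` used in the
discretization `disc(f,S)` of `f` along `S = {α_1 < ⋯ < α_k}`. -/
def discKnot (f : ℝ → ℝ) (S : Finset ℝ) (i : ℕ) : ℝ :=
  if i = 0 then 0 else if i < S.card then ell f (sortedNth S (i - 1)) else 1

/-- The discretization (piecewise-linearization) `disc(f,S) = f 0 + plin(z,α)` of `f`
along `S = {α_1 < ⋯ < α_k}`, where `z_i = ℓ(f|α_i)`.  On `[0,1]` the piecewise-linear
function `plin(z,α)` (which is `0` at `0` and has slope `α_i` on `(z_{i-1}, z_i]`,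
with `z_0 = 0` and the last piece extending to `1`) is given by the closed form
`plin(z,α)(x) = ∑_{i=1}^k α_i (min(x, z_i) - min(x, z_{i-1}))` with `z_k := 1`. -/
def disc (f : ℝ → ℝ) (S : Finset ℝ) : ℝ → ℝ := fun x =>
  f 0 + ∑ i ∈ Finset.range S.card,
    sortedNth S i * (min x (discKnot f S (i + 1)) - min x (discKnot f S i))

/- ## Auxiliary lemmas -/

lemma leftD_le_iff {g : ℝ → ℝ} {x β : ℝ} :
    leftD g x ≤ (β : EReal) ↔ ∀ δ : ℝ, 0 < δ → δ ≤ x → (g x - g (x - δ)) / δ ≤ β := by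
  rw [leftD, iSup_le_iff]
  constructor
  · intro h δ h1 h2
    exact EReal.coe_le_coe_iff.mp (h ⟨δ, h1, h2⟩)
  · rintro h ⟨δ, h1, h2⟩
    exact EReal.coe_le_coe_iff.mpr (h δ h1 h2)

lemma zero_mem_ellSet (g : ℝ → ℝ) (β : ℝ) :
    (0:ℝ) ∈ {x ∈ unitI | leftD g x ≤ (β : EReal)} := by
  refine ⟨⟨le_refl 0, zero_le_one⟩, ?_⟩
  rw [leftD_le_iff]
  intro δ h1 h2; linarith

lemma ellSet_bddAbove (g : ℝ → ℝ) (β : ℝ) :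
    BddAbove {x ∈ unitI | leftD g x ≤ (β : EReal)} :=
  ⟨1, fun _ hx => hx.1.2⟩

lemma ell_nonneg (g : ℝ → ℝ) (β : ℝ) : 0 ≤ ell g β :=
  le_csSup (ellSet_bddAbove g β) (zero_mem_ellSet g β)

lemma ell_le_one (g : ℝ → ℝ) (β : ℝ) : ell g β ≤ 1 :=
  csSup_le ⟨0, zero_mem_ellSet g β⟩ (fun _ hx => hx.1.2)

lemma ell_mono (g : ℝ → ℝ) {β β' : ℝ} (h : β ≤ β') : ell g β ≤ ell g β' :=
  csSup_le_csSup (ellSet_bddAbove g β') ⟨0, zero_mem_ellSet g β⟩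
    (fun _ hx => ⟨hx.1, hx.2.trans (EReal.coe_le_coe_iff.mpr h)⟩)

lemma leftD_ell_le (f : ℝ → ℝ) (hf : ContinuousOn f unitI) {β : ℝ} (hβ : 0 ≤ β) :
    leftD f (ell f β) ≤ (β : EReal) := by
  set A := {x ∈ unitI | leftD f x ≤ (β : EReal)} with hA
  have hxs : ell f β = sSup A := rfl
  set x := ell f β with hxdef
  have hx0 : 0 ≤ x := ell_nonneg f β
  have hx1 : x ≤ 1 := ell_le_one f β
  rw [leftD_le_iff]
  intro δ hδ hδx
  rw [div_le_iff₀ hδ]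
  refine le_of_forall_pos_le_add (fun ε hε => ?_)
  have hc : ContinuousWithinAt f unitI x := hf x ⟨hx0, hx1⟩
  rw [Metric.continuousWithinAt_iff] at hc
  obtain ⟨η, hη, hcont⟩ := hc ε hε
  have hθ : 0 < min η δ := lt_min hη hδ
  obtain ⟨y, hyA, hy⟩ := exists_lt_of_lt_csSup (s := A) (b := x - min η δ) ⟨0, zero_mem_ellSet f β⟩
    (by rw [← hxs]; linarith)
  have hyx : y ≤ x := by rw [hxs]; exact le_csSup (ellSet_bddAbove f β) hyA
  have hminη : min η δ ≤ η := min_le_left _ _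
  have hminδ : min η δ ≤ δ := min_le_right _ _
  have h1 : dist (f y) (f x) < ε := hcont hyA.1 (by
    rw [Real.dist_eq, abs_sub_lt_iff]; constructor <;> linarith)
  have h1' : f x - f y < ε := by
    rw [Real.dist_eq] at h1
    have := abs_lt.mp h1
    linarith [this.1]
  have hy' : x - δ < y := by linarith
  have h2 := (leftD_le_iff.mp hyA.2) (y - (x - δ)) (by linarith) (by linarith)
  rw [div_le_iff₀ (by linarith)] at h2
  have h3 : y - (y - (x - δ)) = x - δ := by ring
  rw [h3] at h2
  have h4 : β * (y - (x - δ)) ≤ β * δ :=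
    mul_le_mul_of_nonneg_left (by linarith) hβ
  linarith

lemma sub_le_of_leftD_le {f : ℝ → ℝ} {x u β : ℝ} (h : leftD f x ≤ (β : EReal))
    (hu0 : 0 ≤ u) (hux : u ≤ x) : f x - f u ≤ β * (x - u) := by
  rcases eq_or_lt_of_le hux with rfl | hlt
  · simp
  · have h2 := (leftD_le_iff.mp h) (x - u) (by linarith) (by linarith)
    rw [div_le_iff₀ (by linarith)] at h2
    have h3 : x - (x - u) = u := by ring
    rw [h3] at h2
    linarith

lemma min_sub_min_mono {u v a b : ℝ} (huv : u ≤ v) (hab : a ≤ b) :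
    min u b - min u a ≤ min v b - min v a := by
  simp only [min_def]; split_ifs <;> linarith

lemma sortedNth_mono (S : Finset ℝ) {i j : ℕ} (hij : i ≤ j) (hj : j < S.card) :
    sortedNth S i ≤ sortedNth S j := by
  have hlen : (S.sort (· ≤ ·)).length = S.card := Finset.length_sort _
  have hi' : i < (S.sort (· ≤ ·)).length := by omega
  have hj' : j < (S.sort (· ≤ ·)).length := by omega
  unfold sortedNth
  rw [List.getD_eq_getElem _ _ hi', List.getD_eq_getElem _ _ hj']
  exact (Finset.pairwise_sort S (· ≤ ·)).rel_get_of_le (a := ⟨i, hi'⟩) (b := ⟨j, hj'⟩)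
    (Fin.mk_le_mk.mpr hij)

lemma sortedNth_mem (S : Finset ℝ) {i : ℕ} (hi : i < S.card) : sortedNth S i ∈ S := by
  have hlen : (S.sort (· ≤ ·)).length = S.card := Finset.length_sort _
  unfold sortedNth
  rw [List.getD_eq_getElem _ _ (by omega)]
  exact (Finset.mem_sort _).mp (List.getElem_mem _)

lemma discKnot_zero (f : ℝ → ℝ) (S : Finset ℝ) : discKnot f S 0 = 0 := if_pos rfl

lemma discKnot_nonneg (f : ℝ → ℝ) (S : Finset ℝ) (i : ℕ) : 0 ≤ discKnot f S i := by
  unfold discKnot; split_ifs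
  exacts [le_rfl, ell_nonneg _ _, zero_le_one]

lemma discKnot_le_one (f : ℝ → ℝ) (S : Finset ℝ) (i : ℕ) : discKnot f S i ≤ 1 := by
  unfold discKnot; split_ifs
  exacts [zero_le_one, ell_le_one _ _, le_rfl]

lemma discKnot_succ_le (f : ℝ → ℝ) (S : Finset ℝ) (i : ℕ) :
    discKnot f S i ≤ discKnot f S (i + 1) := by
  rcases Nat.eq_zero_or_pos i with rfl | hi
  · rw [discKnot_zero]; exact discKnot_nonneg f S 1
  by_cases hc : i + 1 < S.card
  · rw [show discKnot f S i = ell f (sortedNth S (i - 1)) from by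
        unfold discKnot; rw [if_neg (by omega), if_pos (by omega)],
      show discKnot f S (i + 1) = ell f (sortedNth S i) from by
        unfold discKnot; rw [if_neg (by omega), if_pos hc]; norm_num]
    exact ell_mono _ (sortedNth_mono S (by omega) (by omega))
  · rw [show discKnot f S (i + 1) = 1 from by
        unfold discKnot; rw [if_neg (by omega), if_neg hc]]
    exact discKnot_le_one f S i

lemma discKnot_mono (f : ℝ → ℝ) (S : Finset ℝ) : Monotone (discKnot f S) :=
  monotone_nat_of_le_succ (discKnot_succ_le f S)

lemma discKnot_card (f : ℝ → ℝ) (S : Finset ℝ) (hcard : S.card ≠ 0) :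
    discKnot f S S.card = 1 := by
  unfold discKnot; rw [if_neg hcard, if_neg (lt_irrefl _)]

lemma min_knot_sum (f : ℝ → ℝ) (S : Finset ℝ) (hcard : S.card ≠ 0) {x : ℝ}
    (h0 : 0 ≤ x) (h1 : x ≤ 1) :
    ∑ i ∈ Finset.range S.card,
      (min x (discKnot f S (i + 1)) - min x (discKnot f S i)) = x := by
  rw [Finset.sum_range_sub (fun i => min x (discKnot f S i)) S.card]
  rw [discKnot_zero, discKnot_card f S hcard, min_eq_left h1, min_eq_right h0, sub_zero]

lemma disc_mono (f : ℝ → ℝ) (S : Finset ℝ) (hS_nonneg : ∀ a ∈ S, 0 ≤ a) :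
    Monotone (disc f S) := by
  intro u v huv
  unfold disc
  refine add_le_add le_rfl (Finset.sum_le_sum fun i hi => ?_)
  rw [Finset.mem_range] at hi
  exact mul_le_mul_of_nonneg_left (min_sub_min_mono huv (discKnot_succ_le f S i))
    (hS_nonneg _ (sortedNth_mem S hi))

lemma disc_secant (f : ℝ → ℝ) (S : Finset ℝ) (hcard : S.card ≠ 0) {m : ℕ} (hm : m < S.card)
    {u v : ℝ} (hu : 0 ≤ u) (huv : u ≤ v) (hv : v ≤ discKnot f S (m + 1)) :
    disc f S v - disc f S u ≤ sortedNth S m * (v - u) := by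
  have hv1 : v ≤ 1 := hv.trans (discKnot_le_one f S (m + 1))
  have key : ∀ i ∈ Finset.range S.card,
      sortedNth S i * (min v (discKnot f S (i + 1)) - min v (discKnot f S i)) -
        sortedNth S i * (min u (discKnot f S (i + 1)) - min u (discKnot f S i)) ≤
      sortedNth S m * ((min v (discKnot f S (i + 1)) - min v (discKnot f S i)) -
        (min u (discKnot f S (i + 1)) - min u (discKnot f S i))) := by
    intro i hi
    rw [Finset.mem_range] at hi
    rw [← mul_sub]
    set Δ := (min v (discKnot f S (i + 1)) - min v (discKnot f S i)) -
        (min u (discKnot f S (i + 1)) - min u (discKnot f S i)) with hΔdef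
    have hΔ0 : 0 ≤ Δ := by
      have := min_sub_min_mono huv (discKnot_succ_le f S i) (u := u) (v := v)
      rw [hΔdef]; linarith
    by_cases him : i ≤ m
    · exact mul_le_mul_of_nonneg_right (sortedNth_mono S him hm) hΔ0
    · have h1 : discKnot f S (m + 1) ≤ discKnot f S i := discKnot_mono f S (by omega)
      have h2 : discKnot f S (m + 1) ≤ discKnot f S (i + 1) := discKnot_mono f S (by omega)
      have hΔz : Δ = 0 := by
        rw [hΔdef, min_eq_left (hv.trans h2), min_eq_left (hv.trans h1),
          min_eq_left (huv.trans (hv.trans h2)), min_eq_left (huv.trans (hv.trans h1))]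
        ring
      rw [hΔz, mul_zero, mul_zero]
  have hsplit : disc f S v - disc f S u =
      ∑ i ∈ Finset.range S.card,
        (sortedNth S i * (min v (discKnot f S (i + 1)) - min v (discKnot f S i)) -
         sortedNth S i * (min u (discKnot f S (i + 1)) - min u (discKnot f S i))) := by
    unfold disc
    rw [Finset.sum_sub_distrib]
    ring
  rw [hsplit]
  calc _ ≤ ∑ i ∈ Finset.range S.card,
      sortedNth S m * ((min v (discKnot f S (i + 1)) - min v (discKnot f S i)) -
        (min u (discKnot f S (i + 1)) - min u (discKnot f S i))) :=
      Finset.sum_le_sum key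
    _ = sortedNth S m * (v - u) := by
      rw [← Finset.mul_sum, Finset.sum_sub_distrib,
        min_knot_sum f S hcard hu (huv.trans hv1),
        min_knot_sum f S hcard (hu.trans huv) hv1]

lemma key2 (f : ℝ → ℝ) (hf : ContinuousOn f unitI) (S : Finset ℝ)
    (hS_nonneg : ∀ a ∈ S, 0 ≤ a) {m : ℕ} (hm : m < S.card) :
    ∀ j ≤ S.card, f (min (ell f (sortedNth S m)) (discKnot f S j)) ≤
      f 0 + ∑ i ∈ Finset.range j, sortedNth S i *
        (min (ell f (sortedNth S m)) (discKnot f S (i + 1)) -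
         min (ell f (sortedNth S m)) (discKnot f S i)) := by
  set β := sortedNth S m with hβdef
  set x := ell f β with hxdef
  have hβ0 : 0 ≤ β := hS_nonneg _ (sortedNth_mem S hm)
  have hx0 : 0 ≤ x := ell_nonneg f β
  have hzm : discKnot f S m ≤ x := by
    rcases Nat.eq_zero_or_pos m with rfl | hm0
    · rw [discKnot_zero]; exact hx0
    · rw [show discKnot f S m = ell f (sortedNth S (m - 1)) from by
        unfold discKnot; rw [if_neg (by omega), if_pos hm]]
      exact ell_mono f (sortedNth_mono S (by omega) hm)
  have hxz : x ≤ discKnot f S (m + 1) := by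
    by_cases hc : m + 1 < S.card
    · rw [show discKnot f S (m + 1) = ell f (sortedNth S m) from by
        unfold discKnot; rw [if_neg (by omega), if_pos hc]; norm_num]
    · rw [show discKnot f S (m + 1) = 1 from by
        unfold discKnot; rw [if_neg (by omega), if_neg hc]]
      exact ell_le_one f β
  intro j
  induction j with
  | zero =>
    intro _
    rw [discKnot_zero, min_eq_right hx0]
    simp
  | succ j ih =>
    intro hj
    have hj' : j < S.card := by omega
    have IH := ih (by omega)
    rw [Finset.sum_range_succ]
    set u := min x (discKnot f S j) with hudef
    set v := min x (discKnot f S (j + 1)) with hvdef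
    have huv : u ≤ v := min_le_min le_rfl (discKnot_succ_le f S j)
    have hu0 : 0 ≤ u := le_min hx0 (discKnot_nonneg f S j)
    have hstep : f v - f u ≤ sortedNth S j * (v - u) := by
      by_cases hjm : j < m
      · have hveq : v = discKnot f S (j + 1) :=
          min_eq_right ((discKnot_mono f S (show j + 1 ≤ m by omega)).trans hzm)
        have hknot : discKnot f S (j + 1) = ell f (sortedNth S j) := by
          unfold discKnot; rw [if_neg (by omega), if_pos (by omega)]; norm_num
        have hld : leftD f v ≤ ((sortedNth S j : ℝ) : EReal) := by
          rw [hveq, hknot]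
          exact leftD_ell_le f hf (hS_nonneg _ (sortedNth_mem S hj'))
        exact sub_le_of_leftD_le hld hu0 huv
      · have hveq : v = x :=
          min_eq_left (hxz.trans (discKnot_mono f S (show m + 1 ≤ j + 1 by omega)))
        have hld : leftD f v ≤ ((sortedNth S j : ℝ) : EReal) := by
          rw [hveq, hxdef]
          exact (leftD_ell_le f hf hβ0).trans
            (EReal.coe_le_coe_iff.mpr (sortedNth_mono S (by omega) hj'))
        exact sub_le_of_leftD_le hld hu0 huv
    linarith

theorem stmt7 (f : ℝ → ℝ) (hf_cont : ContinuousOn f unitI)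
    (hf_conv : ConvexOn ℝ unitI f)
    (S : Finset ℝ) (hS : S.Nonempty) (hS_nonneg : ∀ a ∈ S, 0 ≤ a)
    (β : ℝ) (hβ : β ∈ S) :
    ell f β ≤ ell (disc f S) β ∧ f (ell f β) ≤ disc f S (ell (disc f S) β) := by
  have hcard : S.card ≠ 0 := Finset.card_ne_zero.mpr hS
  obtain ⟨m, hm, hmβ⟩ : ∃ m, m < S.card ∧ sortedNth S m = β := by
    have hβL : β ∈ S.sort (· ≤ ·) := (Finset.mem_sort _).mpr hβ
    obtain ⟨n, hn, he⟩ := List.mem_iff_getElem.mp hβL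
    refine ⟨n, ?_, ?_⟩
    · rw [← Finset.length_sort (α := ℝ) (· ≤ ·)]; exact hn
    · unfold sortedNth; rw [List.getD_eq_getElem _ _ hn]; exact he
  set x := ell f β with hxdef
  have hβ0 : 0 ≤ β := hS_nonneg β hβ
  have hx0 : 0 ≤ x := ell_nonneg f β
  have hx1 : x ≤ 1 := ell_le_one f β
  have hxz : x ≤ discKnot f S (m + 1) := by
    by_cases hc : m + 1 < S.card
    · rw [show discKnot f S (m + 1) = ell f (sortedNth S m) from by
        unfold discKnot; rw [if_neg (by omega), if_pos hc]; norm_num, hmβ]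
    · rw [show discKnot f S (m + 1) = 1 from by
        unfold discKnot; rw [if_neg (by omega), if_neg hc]]
      exact hx1
  have hmem : x ∈ {y ∈ unitI | leftD (disc f S) y ≤ (β : EReal)} := by
    refine ⟨⟨hx0, hx1⟩, ?_⟩
    rw [leftD_le_iff]
    intro δ hδ hδx
    rw [div_le_iff₀ hδ]
    have hsec := disc_secant f S hcard hm (u := x - δ) (v := x)
      (by linarith) (by linarith) hxz
    rw [hmβ] at hsec
    have : x - (x - δ) = δ := by ring
    rw [this] at hsec
    exact hsec
  have h1 : x ≤ ell (disc f S) β := le_csSup (ellSet_bddAbove _ _) hmem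
  have h2 : f x ≤ disc f S x := by
    have hk := key2 f hf_cont S hS_nonneg hm S.card le_rfl
    rw [hmβ, discKnot_card f S hcard, min_eq_left hx1] at hk
    exact hk
  have h3 : disc f S x ≤ disc f S (ell (disc f S) β) :=
    disc_mono f S hS_nonneg h1
  exact ⟨h1, h2.trans h3⟩

end
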